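/- Let (X_i) be IID with S_n = X_1 + ⋯ + X_n and suppose there exist a > 0 and C > 0 with P(S_k > a·k) ≥ C for all k ∈ ℕ. Let N be a positive-integer-valued random variable independent of (X_i). Then for every s > 0, E[((S_N)⁺)^s] ≥ a^s · C · E[N^s]; hence the moment index of S_N is at most that of N. -/

import Mathlib

open MeasureTheory ProbabilityTheory Real Filter

/-- The moment index `I(Z) = sup {s ≥ 0 : E[(Z⁺)^s] < ∞}`, valued in `ENNReal`. -/
noncomputable def momentIndex {Ω : Type*} [MeasurableSpace Ω] (μ : Measure Ω)
    (Z : Ω → ℝ) : ENNReal :=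
  sSup {s : ENNReal | s ≠ ⊤ ∧
    ∫⁻ ω, ENNReal.ofReal ((max (Z ω) 0) ^ s.toReal) ∂μ < ⊤}

/-- If `P(S_k > a·k) ≥ C > 0` for all `k ≥ 1`, then for every `s > 0`
`E[((S_N)⁺)^s] ≥ a^s · C · E[N^s]`; hence `I(S_N) ≤ I(N)`. -/
theorem stopped_sum_moment_index_le_stopping
    {Ω : Type*} [MeasurableSpace Ω] (μ : Measure Ω) [IsProbabilityMeasure μ]
    (X : ℕ → Ω → ℝ) (hXmeas : ∀ i, Measurable (X i))
    (hXindep : iIndepFun X μ)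
    (hXident : ∀ i, IdentDistrib (X i) (X 0) μ μ)
    (a C : ℝ) (ha : 0 < a) (hC : 0 < C)
    (hlb : ∀ k : ℕ, 1 ≤ k →
      ENNReal.ofReal C ≤ μ {ω | a * k < ∑ i ∈ Finset.range k, X i ω})
    (N : Ω → ℕ) (hNmeas : Measurable N) (hNpos : ∀ ω, 1 ≤ N ω)
    (hNindep : IndepFun (fun ω i => X i ω) N μ) :
    (∀ s : ℝ, 0 < s →
      ENNReal.ofReal (a ^ s * C) * ∫⁻ ω, ENNReal.ofReal ((N ω : ℝ) ^ s) ∂μ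
        ≤ ∫⁻ ω, ENNReal.ofReal ((max (∑ k ∈ Finset.range (N ω), X k ω) 0) ^ s) ∂μ)
    ∧ momentIndex μ (fun ω => ∑ k ∈ Finset.range (N ω), X k ω)
        ≤ momentIndex μ (fun ω => (N ω : ℝ)) := by
  have hXvec : Measurable (fun ω i => X i ω) :=
    measurable_pi_lambda _ hXmeas
  have hmain : ∀ s : ℝ, 0 < s →
      ENNReal.ofReal (a ^ s * C) * ∫⁻ ω, ENNReal.ofReal ((N ω : ℝ) ^ s) ∂μ
        ≤ ∫⁻ ω, ENNReal.ofReal ((max (∑ k ∈ Finset.range (N ω), X k ω) 0) ^ s) ∂μ := by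
    intro s hs
    set G : Ω → ENNReal :=
      fun ω => ENNReal.ofReal ((max (∑ k ∈ Finset.range (N ω), X k ω) 0) ^ s) with hG
    -- Decompose the N-integral as a sum over values of N
    have hNint : ∫⁻ ω, ENNReal.ofReal ((N ω : ℝ) ^ s) ∂μ
        = ∑' k : ℕ, ENNReal.ofReal ((k : ℝ) ^ s) * μ (N ⁻¹' {k}) := by
      have hmf : Measurable (fun k : ℕ => ENNReal.ofReal ((k : ℝ) ^ s)) :=
        measurable_from_top
      rw [← lintegral_map hmf hNmeas, lintegral_countable']
      congr 1
      ext k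
      rw [Measure.map_apply hNmeas (measurableSet_singleton k)]
    -- Decompose the S_N-integral
    have hdisj : Pairwise (Function.onFun Disjoint (fun k : ℕ => N ⁻¹' {k})) := by
      intro i j hij
      exact (Set.disjoint_singleton.mpr hij).preimage N
    have hGint : ∫⁻ ω, G ω ∂μ = ∑' k : ℕ, ∫⁻ ω in N ⁻¹' {k}, G ω ∂μ := by
      rw [← lintegral_iUnion (fun k => hNmeas (measurableSet_singleton k)) hdisj]
      have : (⋃ k : ℕ, N ⁻¹' {k}) = Set.univ := by
        ext ω; simp
      rw [this, Measure.restrict_univ]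
    rw [hNint, hGint, ← ENNReal.tsum_mul_left]
    refine ENNReal.tsum_le_tsum fun k => ?_
    rcases Nat.eq_zero_or_pos k with hk0 | hk
    · subst hk0
      simp [Real.zero_rpow hs.ne']
    · -- k ≥ 1
      set B : Set (ℕ → ℝ) := {y : ℕ → ℝ | a * k < ∑ i ∈ Finset.range k, y i} with hB
      have hBmeas : MeasurableSet B := by
        have : Measurable (fun y : ℕ → ℝ => ∑ i ∈ Finset.range k, y i) :=
          Finset.measurable_sum _ fun i _ => measurable_pi_apply i
        exact measurableSet_lt measurable_const this
      have hinter : μ ((fun ω i => X i ω) ⁻¹' B ∩ N ⁻¹' {k})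
          = μ ((fun ω i => X i ω) ⁻¹' B) * μ (N ⁻¹' {k}) :=
        hNindep.measure_inter_preimage_eq_mul B {k} hBmeas (measurableSet_singleton k)
      have hBpre : (fun ω i => X i ω) ⁻¹' B
          = {ω | a * k < ∑ i ∈ Finset.range k, X i ω} := rfl
      have hCB : ENNReal.ofReal C ≤ μ ((fun ω i => X i ω) ⁻¹' B) := by
        rw [hBpre]; exact hlb k hk
      -- lower bound the set integral
      have hset : MeasurableSet ((fun ω i => X i ω) ⁻¹' B ∩ N ⁻¹' {k}) :=
        (hXvec hBmeas).inter (hNmeas (measurableSet_singleton k))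
      have hstep1 : ENNReal.ofReal ((a * k) ^ s)
            * μ ((fun ω i => X i ω) ⁻¹' B ∩ N ⁻¹' {k})
          ≤ ∫⁻ ω in N ⁻¹' {k}, G ω ∂μ := by
        have h1 : ENNReal.ofReal ((a * k) ^ s)
              * μ ((fun ω i => X i ω) ⁻¹' B ∩ N ⁻¹' {k})
            = ∫⁻ _ in ((fun ω i => X i ω) ⁻¹' B ∩ N ⁻¹' {k}),
                ENNReal.ofReal ((a * k) ^ s) ∂μ := by
          rw [setLIntegral_const]
        rw [h1]
        have h2 : ∫⁻ ω in ((fun ω i => X i ω) ⁻¹' B ∩ N ⁻¹' {k}),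
              ENNReal.ofReal ((a * k) ^ s) ∂μ
            ≤ ∫⁻ ω in ((fun ω i => X i ω) ⁻¹' B ∩ N ⁻¹' {k}), G ω ∂μ := by
          refine setLIntegral_mono' hset fun ω hω => ?_
          obtain ⟨hωB, hωN⟩ := hω
          have hNk : N ω = k := hωN
          have hSk : a * k < ∑ i ∈ Finset.range k, X i ω := hωB
          have hak : (0:ℝ) ≤ a * k := by positivity
          have hle : a * k ≤ max (∑ i ∈ Finset.range (N ω), X i ω) 0 := by
            rw [hNk]
            exact le_max_of_le_left hSk.le
          exact ENNReal.ofReal_le_ofReal (Real.rpow_le_rpow hak hle hs.le)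
        refine h2.trans (lintegral_mono' (Measure.restrict_mono Set.inter_subset_right le_rfl) le_rfl)
      calc ENNReal.ofReal (a ^ s * C) * (ENNReal.ofReal ((k : ℝ) ^ s) * μ (N ⁻¹' {k}))
          = ENNReal.ofReal ((a * k) ^ s) * (ENNReal.ofReal C * μ (N ⁻¹' {k})) := by
            rw [Real.mul_rpow ha.le (Nat.cast_nonneg k),
              ENNReal.ofReal_mul (by positivity : (0:ℝ) ≤ a ^ s),
              ENNReal.ofReal_mul (by positivity : (0:ℝ) ≤ a ^ s)]
            ring
        _ ≤ ENNReal.ofReal ((a * k) ^ s)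
              * μ ((fun ω i => X i ω) ⁻¹' B ∩ N ⁻¹' {k}) := by
            rw [hinter]
            exact mul_le_mul_right (mul_le_mul_left hCB _) _
        _ ≤ ∫⁻ ω in N ⁻¹' {k}, G ω ∂μ := hstep1
  refine ⟨hmain, ?_⟩
  refine sSup_le_sSup fun s hs => ?_
  obtain ⟨hsne, hsfin⟩ := hs
  refine ⟨hsne, ?_⟩
  rcases eq_or_lt_of_le (ENNReal.toReal_nonneg (a := s)) with h0 | hpos
  · simp [← h0, Real.rpow_zero]
  · have hrw : ∀ ω : Ω, max ((N ω : ℝ)) 0 = (N ω : ℝ) :=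
      fun ω => max_eq_left (Nat.cast_nonneg _)
    simp only [hrw]
    have h := hmain s.toReal hpos
    have hc : (0:ℝ) < a ^ s.toReal * C :=
      mul_pos (Real.rpow_pos_of_pos ha _) hC
    by_contra hcon
    rw [not_lt, top_le_iff] at hcon
    rw [hcon, ENNReal.mul_top (by simp [ENNReal.ofReal_eq_zero, not_le, hc])] at h
    exact (h.trans_lt hsfin).ne rfl
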